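/- arXiv:1403.0372 — 2 statements merged into one kernel-verified Lean document; each statement's English description precedes it below -/
import Mathlib

section
/- Let 1<p<∞. The exponent 1/(p-1) in the bound ‖M⁺‖_{L^p_w} ≤ c‖w‖_{A_p^+}^{1/(p-1)} is sharp in the following concrete sense: there are positive constants c₁, c₂, c₃ (depending only on p) such that for every ε ∈ (0,1), the weight w(x) = |1-x|^{(1-ε)(p-1)} satisfies c₁/ε ≤ ‖w‖_{A_p^+(ℝ)}^{1/(p-1)} ≤ c₂/ε, the function f(t) = (1-t)^{ε(p-1)-1}·χ_{(0,1)}(t) belongs to L^p_w(ℝ), and ‖M⁺f‖_{L^p_w(ℝ)} ≥ (c₃/ε) ‖f‖_{L^p_w(ℝ)}. -/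
open MeasureTheory Set Filter
open scoped ENNReal

noncomputable section

/-- `∫_a^b w` as a lower integral. -/
def lintIoc (w : ℝ → ℝ) (a b : ℝ) : ℝ≥0∞ :=
  ∫⁻ t in Set.Ioc a b, ENNReal.ofReal (w t)

/-- Average `(1/(b-a)) ∫_a^b w`. -/
def avgIoc (w : ℝ → ℝ) (a b : ℝ) : ℝ≥0∞ :=
  (ENNReal.ofReal (b - a))⁻¹ * lintIoc w a b

/-- The one-sided Muckenhoupt `A_p^+` characteristic:
`sup_{x, h>0} ((1/h)∫_{x-h}^x w) ((1/h)∫_x^{x+h} w^{1-p'})^{p-1}` with `p' = p/(p-1)`. -/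
def apPlusChar (p : ℝ) (w : ℝ → ℝ) : ℝ≥0∞ :=
  ⨆ (x : ℝ) (h : ℝ) (_ : 0 < h),
    avgIoc w (x - h) x *
      avgIoc (fun t => w t ^ (1 - p / (p - 1))) x (x + h) ^ (p - 1)

/-- Weighted `L^p` "norm" `(∫ g^p w)^{1/p}` of an `ℝ≥0∞`-valued function. -/
def lnormW (p : ℝ) (w : ℝ → ℝ) (g : ℝ → ℝ≥0∞) : ℝ≥0∞ :=
  (∫⁻ x : ℝ, g x ^ p * ENNReal.ofReal (w x)) ^ (1 / p)

/-- One-sided (right) Hardy–Littlewood maximal operator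
`M⁺f(x) = sup_{h>0} (1/h) ∫_x^{x+h} |f|`. -/
def Mplus (f : ℝ → ℝ) (x : ℝ) : ℝ≥0∞ :=
  ⨆ (h : ℝ) (_ : 0 < h),
    (ENNReal.ofReal h)⁻¹ * ∫⁻ t in Set.Ioc x (x + h), ENNReal.ofReal |f t|

private lemma rpow_add_le' {a b e : ℝ} (ha : 0 ≤ a) (hb : 0 ≤ b)
    (he : 0 ≤ e) (he1 : e ≤ 1) : (a + b) ^ e ≤ a ^ e + b ^ e := by
  have h := NNReal.rpow_add_le_add_rpow a.toNNReal b.toNNReal he he1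
  have h' := NNReal.coe_le_coe.2 h
  push_cast at h'
  rwa [Real.coe_toNNReal a ha, Real.coe_toNNReal b hb] at h'

/-- `∫⁻_{(a,b]} (c-t)^r` for `b ≤ c`, `-1 < r`. -/
private lemma lint_left {a b c r : ℝ} (hab : a ≤ b) (hbc : b ≤ c) (hr : -1 < r) :
    ∫⁻ t in Set.Ioc a b, ENNReal.ofReal ((c - t) ^ r) =
      ENNReal.ofReal (((c - a) ^ (r + 1) - (c - b) ^ (r + 1)) / (r + 1)) := by
  have hint : IntervalIntegrable (fun t => (c - t) ^ r) volume a b := by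
    have := (intervalIntegral.intervalIntegrable_rpow' hr (a := c - b) (b := c - a)).comp_sub_left c
    simpa using this.symm
  rw [← MeasureTheory.ofReal_integral_eq_lintegral_ofReal hint.1
    (ae_restrict_of_forall_mem measurableSet_Ioc fun t ht =>
      Real.rpow_nonneg (by linarith [ht.2] : (0:ℝ) ≤ c - t) r)]
  congr 1
  rw [← intervalIntegral.integral_of_le hab,
    intervalIntegral.integral_comp_sub_left (fun s => s ^ r) c,
    integral_rpow (Or.inl hr)]

/-- `∫⁻_{(a,b]} (t-c)^r` for `c ≤ a`, `-1 < r`. -/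
private lemma lint_right {a b c r : ℝ} (hca : c ≤ a) (hab : a ≤ b) (hr : -1 < r) :
    ∫⁻ t in Set.Ioc a b, ENNReal.ofReal ((t - c) ^ r) =
      ENNReal.ofReal (((b - c) ^ (r + 1) - (a - c) ^ (r + 1)) / (r + 1)) := by
  have hint : IntervalIntegrable (fun t => (t - c) ^ r) volume a b := by
    have := (intervalIntegral.intervalIntegrable_rpow' hr (a := a - c) (b := b - c)).comp_sub_right c
    simpa using this
  rw [← MeasureTheory.ofReal_integral_eq_lintegral_ofReal hint.1
    (ae_restrict_of_forall_mem measurableSet_Ioc fun t ht =>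
      Real.rpow_nonneg (by linarith [ht.1] : (0:ℝ) ≤ t - c) r)]
  congr 1
  rw [← intervalIntegral.integral_of_le hab,
    intervalIntegral.integral_comp_sub_right (fun s => s ^ r) c,
    integral_rpow (Or.inl hr)]

private lemma avg_le_of_le {w : ℝ → ℝ} {a b K : ℝ} (hab : a < b)
    (hw : ∀ t ∈ Set.Ioc a b, w t ≤ K) : avgIoc w a b ≤ ENNReal.ofReal K := by
  unfold avgIoc lintIoc
  have h1 : ∫⁻ t in Set.Ioc a b, ENNReal.ofReal (w t) ≤
      ENNReal.ofReal K * ENNReal.ofReal (b - a) := by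
    calc ∫⁻ t in Set.Ioc a b, ENNReal.ofReal (w t)
        ≤ ∫⁻ _ in Set.Ioc a b, ENNReal.ofReal K :=
          setLIntegral_mono measurable_const fun t ht => ENNReal.ofReal_le_ofReal (hw t ht)
      _ = ENNReal.ofReal K * volume (Set.Ioc a b) := setLIntegral_const _ _
      _ = ENNReal.ofReal K * ENNReal.ofReal (b - a) := by rw [Real.volume_Ioc]
  calc (ENNReal.ofReal (b - a))⁻¹ * ∫⁻ t in Set.Ioc a b, ENNReal.ofReal (w t)
      ≤ (ENNReal.ofReal (b - a))⁻¹ * (ENNReal.ofReal K * ENNReal.ofReal (b - a)) := by gcongr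
    _ = ENNReal.ofReal K := by
        rw [mul_comm (ENNReal.ofReal K), ← mul_assoc, ENNReal.inv_mul_cancel
          (by simp [hab]) ENNReal.ofReal_ne_top, one_mul]

private lemma lnormW_aux {p : ℝ} (hp : 0 < p) (w : ℝ → ℝ) (c : ℝ≥0∞) (hc : c ≠ ⊤)
    (g : ℝ → ℝ≥0∞) :
    (∫⁻ x : ℝ, (c * g x) ^ p * ENNReal.ofReal (w x)) ^ (1 / p) =
      c * (∫⁻ x : ℝ, g x ^ p * ENNReal.ofReal (w x)) ^ (1 / p) := by
  have h1 : ∀ x : ℝ, (c * g x) ^ p * ENNReal.ofReal (w x)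
      = c ^ p * (g x ^ p * ENNReal.ofReal (w x)) := fun x => by
    rw [ENNReal.mul_rpow_of_nonneg _ _ hp.le, mul_assoc]
  simp_rw [h1]
  rw [lintegral_const_mul' _ _ (ENNReal.rpow_ne_top_of_nonneg hp.le hc),
    ENNReal.mul_rpow_of_nonneg _ _ (by positivity : (0:ℝ) ≤ 1 / p),
    ← ENNReal.rpow_mul, mul_one_div, div_self hp.ne', ENNReal.rpow_one]

/-- Sharpness of the exponent `1/(p-1)` in Buckley's bound for `M⁺`: for the weight
`w(x) = |1-x|^{(1-ε)(p-1)}` one has `‖w‖_{A_p^+}^{1/(p-1)} ≍ 1/ε`, the function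
`f(t) = (1-t)^{ε(p-1)-1} χ_{(0,1)}(t)` lies in `L^p_w`, and
`‖M⁺f‖_{L^p_w} ≥ (c₃/ε) ‖f‖_{L^p_w}`. -/
theorem stmt2 (p : ℝ) (hp : 1 < p) :
    ∃ c₁ c₂ c₃ : ℝ, 0 < c₁ ∧ 0 < c₂ ∧ 0 < c₃ ∧
      ∀ ε : ℝ, ε ∈ Set.Ioo (0 : ℝ) 1 →
        let w : ℝ → ℝ := fun x => |1 - x| ^ ((1 - ε) * (p - 1))
        let f : ℝ → ℝ := fun t =>
          if t ∈ Set.Ioo (0 : ℝ) 1 then (1 - t) ^ (ε * (p - 1) - 1) else 0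
        ENNReal.ofReal (c₁ / ε) ≤ apPlusChar p w ^ (1 / (p - 1)) ∧
        apPlusChar p w ^ (1 / (p - 1)) ≤ ENNReal.ofReal (c₂ / ε) ∧
        lnormW p w (fun x => ENNReal.ofReal |f x|) ≠ ∞ ∧
        ENNReal.ofReal (c₃ / ε) * lnormW p w (fun x => ENNReal.ofReal |f x|) ≤
          lnormW p w (Mplus f) := by
  have hp0 : (0:ℝ) < p := by linarith
  have hq : (0:ℝ) < p - 1 := by linarith
  refine ⟨(1/p) ^ (1/(p-1)), 6, 1/(p-1),
    Real.rpow_pos_of_pos (one_div_pos.mpr hp0) _, by norm_num, one_div_pos.mpr hq, ?_⟩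
  intro ε hε
  obtain ⟨hε0, hε1⟩ := hε
  intro w f
  have hw : ∀ x : ℝ, w x = |1 - x| ^ ((1 - ε) * (p - 1)) := fun _ => rfl
  have hf : ∀ x : ℝ, f x = if x ∈ Set.Ioo (0:ℝ) 1 then (1 - x) ^ (ε * (p - 1) - 1) else 0 :=
    fun _ => rfl
  have hα : (0:ℝ) < (1 - ε) * (p - 1) := by nlinarith
  have hαq : (1 - ε) * (p - 1) ≤ p - 1 := by nlinarith
  have hσ : (fun t => w t ^ (1 - p / (p - 1))) = fun t : ℝ => |1 - t| ^ (ε - 1) := by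
    funext t
    rw [hw t, ← Real.rpow_mul (abs_nonneg _)]
    congr 1
    field_simp
    ring
  -- ## Lower bound for the characteristic
  have hQlow : ENNReal.ofReal ((1/p) ^ (1/(p-1)) / ε) ≤ apPlusChar p w ^ (1 / (p - 1)) := by
    have hA : avgIoc w (1 - 1) 1 = ENNReal.ofReal (1 / ((1-ε)*(p-1) + 1)) := by
      rw [show (1:ℝ) - 1 = 0 by norm_num]
      unfold avgIoc lintIoc
      have h1 : ∫⁻ t in Set.Ioc (0:ℝ) 1, ENNReal.ofReal (w t)
          = ∫⁻ t in Set.Ioc (0:ℝ) 1, ENNReal.ofReal ((1 - t) ^ ((1-ε)*(p-1))) := by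
        refine setLIntegral_congr_fun measurableSet_Ioc (fun t ht => ?_)
        rw [hw t, abs_of_nonneg (by linarith [ht.2] : (0:ℝ) ≤ 1 - t)]
      rw [h1, lint_left (by norm_num) (by norm_num) (by linarith : (-1:ℝ) < (1-ε)*(p-1))]
      norm_num [Real.one_rpow, Real.zero_rpow (by nlinarith : (1-ε)*(p-1) + 1 ≠ 0)]
    have hB : avgIoc (fun t => w t ^ (1 - p / (p - 1))) 1 (1 + 1) = ENNReal.ofReal (1/ε) := by
      rw [hσ]
      unfold avgIoc lintIoc
      have h1 : ∫⁻ t in Set.Ioc (1:ℝ) (1+1), ENNReal.ofReal (|1 - t| ^ (ε-1))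
          = ∫⁻ t in Set.Ioc (1:ℝ) (1+1), ENNReal.ofReal ((t - 1) ^ (ε-1)) := by
        refine setLIntegral_congr_fun measurableSet_Ioc (fun t ht => ?_)
        rw [abs_of_nonpos (by linarith [ht.1] : 1 - t ≤ 0), neg_sub]
      rw [h1, lint_right le_rfl (by norm_num) (by linarith : (-1:ℝ) < ε - 1),
        show ε - 1 + 1 = ε by ring]
      norm_num [Real.one_rpow, Real.zero_rpow hε0.ne']
    have hterm : ENNReal.ofReal (1/((1-ε)*(p-1)+1)) * ENNReal.ofReal (1/ε) ^ (p-1)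
        ≤ apPlusChar p w := by
      rw [← hA, ← hB]
      unfold apPlusChar
      calc avgIoc w (1-1) 1 * avgIoc (fun t => w t ^ (1 - p / (p - 1))) 1 (1+1) ^ (p-1)
          ≤ ⨆ (_ : (0:ℝ) < 1), avgIoc w (1-1) 1 *
              avgIoc (fun t => w t ^ (1 - p / (p - 1))) 1 (1+1) ^ (p-1) :=
            le_iSup (fun _ : (0:ℝ) < 1 => _) one_pos
        _ ≤ ⨆ (h : ℝ) (_ : 0 < h), avgIoc w (1-h) 1 *
              avgIoc (fun t => w t ^ (1 - p / (p - 1))) 1 (1+h) ^ (p-1) :=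
            le_iSup (fun h : ℝ => ⨆ (_ : 0 < h), avgIoc w (1-h) 1 *
              avgIoc (fun t => w t ^ (1 - p / (p - 1))) 1 (1+h) ^ (p-1)) 1
        _ ≤ _ := le_iSup (fun x : ℝ => ⨆ (h : ℝ) (_ : 0 < h), avgIoc w (x-h) x *
              avgIoc (fun t => w t ^ (1 - p / (p - 1))) x (x+h) ^ (p-1)) 1
    calc ENNReal.ofReal ((1/p) ^ (1/(p-1)) / ε)
        ≤ (ENNReal.ofReal (1/((1-ε)*(p-1)+1)) * ENNReal.ofReal (1/ε) ^ (p-1)) ^ (1/(p-1)) := by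
          rw [ENNReal.mul_rpow_of_nonneg _ _ (by positivity : (0:ℝ) ≤ 1/(p-1)),
            ← ENNReal.rpow_mul, mul_one_div, div_self hq.ne', ENNReal.rpow_one,
            ENNReal.ofReal_rpow_of_nonneg (by positivity) (by positivity),
            ← ENNReal.ofReal_mul (by positivity)]
          refine ENNReal.ofReal_le_ofReal ?_
          rw [div_eq_mul_one_div]
          have h2 : (1/p : ℝ) ^ (1/(p-1)) ≤ (1/((1-ε)*(p-1)+1)) ^ (1/(p-1)) := by
            refine Real.rpow_le_rpow (by positivity) ?_ (by positivity)
            refine one_div_le_one_div_of_le (by nlinarith) (by nlinarith)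
          have h3 : (0:ℝ) ≤ 1/ε := by positivity
          nlinarith [Real.rpow_nonneg (by positivity : (0:ℝ) ≤ (1/p:ℝ)) (1/(p-1))]
      _ ≤ apPlusChar p w ^ (1/(p-1)) := ENNReal.rpow_le_rpow hterm (by positivity)
  -- ## Upper bound for the characteristic
  have hQup : apPlusChar p w ^ (1 / (p - 1)) ≤ ENNReal.ofReal (6 / ε) := by
    have h6ε : (0:ℝ) < 6/ε := by positivity
    have key : apPlusChar p w ≤ ENNReal.ofReal ((6/ε) ^ (p-1)) := by
      unfold apPlusChar
      refine iSup_le fun x => iSup_le fun h => iSup_le fun hh => ?_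
      rw [hσ]
      have hA : avgIoc w (x - h) x ≤ ENNReal.ofReal ((|1-x| + h) ^ ((1-ε)*(p-1))) := by
        refine avg_le_of_le (by linarith) fun t ht => ?_
        rw [hw t]
        refine Real.rpow_le_rpow (abs_nonneg _) ?_ hα.le
        have h2 : |x - t| ≤ h := abs_le.2 ⟨by linarith [ht.2], by linarith [ht.1]⟩
        calc |1 - t| = |(1 - x) + (x - t)| := by ring_nf
          _ ≤ |1 - x| + |x - t| := abs_add_le _ _
          _ ≤ |1 - x| + h := by linarith
      by_cases hcase : |1 - x| ≤ 2 * h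
      · -- interval near the singularity
        have hε' : (-1:ℝ) < ε - 1 := by linarith
        have hsub : ∀ a b : ℝ, a ≤ b → b ≤ 1 →
            (∫⁻ t in Set.Ioc a b, ENNReal.ofReal (|1-t| ^ (ε-1)))
              = ENNReal.ofReal (((1-a) ^ ε - (1-b) ^ ε) / ε) := by
          intro a b hab hb1
          have h1 : ∫⁻ t in Set.Ioc a b, ENNReal.ofReal (|1-t| ^ (ε-1))
              = ∫⁻ t in Set.Ioc a b, ENNReal.ofReal ((1-t) ^ (ε-1)) := by
            refine setLIntegral_congr_fun measurableSet_Ioc (fun t ht => ?_)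
            rw [abs_of_nonneg (by linarith [ht.2] : (0:ℝ) ≤ 1 - t)]
          rw [h1, lint_left hab hb1 hε', show ε - 1 + 1 = ε by ring]
        have hsub' : ∀ a b : ℝ, 1 ≤ a → a ≤ b →
            (∫⁻ t in Set.Ioc a b, ENNReal.ofReal (|1-t| ^ (ε-1)))
              = ENNReal.ofReal (((b-1) ^ ε - (a-1) ^ ε) / ε) := by
          intro a b h1a hab
          have h1 : ∫⁻ t in Set.Ioc a b, ENNReal.ofReal (|1-t| ^ (ε-1))
              = ∫⁻ t in Set.Ioc a b, ENNReal.ofReal ((t-1) ^ (ε-1)) := by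
            refine setLIntegral_congr_fun measurableSet_Ioc (fun t ht => ?_)
            rw [abs_of_nonpos (by linarith [ht.1] : 1 - t ≤ 0), neg_sub]
          rw [h1, lint_right h1a hab hε', show ε - 1 + 1 = ε by ring]
        have hBint : (∫⁻ t in Set.Ioc x (x+h), ENNReal.ofReal (|1-t| ^ (ε-1)))
            ≤ ENNReal.ofReal (2 * h ^ ε / ε) := by
          rcases le_or_gt (x+h) 1 with h1 | h1
          · rw [hsub x (x+h) (by linarith) h1]
            refine ENNReal.ofReal_le_ofReal ?_
            have h2 := rpow_add_le' (a := 1 - (x+h)) (b := h) (by linarith) hh.le hε0.le hε1.le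
            rw [show 1 - (x+h) + h = 1 - x by ring] at h2
            have h3 : (1-x) ^ ε - (1-(x+h)) ^ ε ≤ h ^ ε := by linarith
            have h4 : (0:ℝ) ≤ h ^ ε := Real.rpow_nonneg hh.le _
            rw [div_le_div_iff₀ hε0 hε0]
            nlinarith
          rcases le_or_gt 1 x with h2 | h2
          · rw [hsub' x (x+h) h2 (by linarith)]
            refine ENNReal.ofReal_le_ofReal ?_
            have h3 := rpow_add_le' (a := x - 1) (b := h) (by linarith) hh.le hε0.le hε1.le
            rw [show x - 1 + h = x + h - 1 by ring] at h3
            have h4 : (0:ℝ) ≤ h ^ ε := Real.rpow_nonneg hh.le _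
            rw [div_le_div_iff₀ hε0 hε0]
            nlinarith
          · -- x < 1 < x + h
            rw [← Set.Ioc_union_Ioc_eq_Ioc h2.le h1.le,
              lintegral_union measurableSet_Ioc (Set.Ioc_disjoint_Ioc_of_le le_rfl)]
            have p1 : (∫⁻ t in Set.Ioc x 1, ENNReal.ofReal (|1-t| ^ (ε-1)))
                ≤ ENNReal.ofReal (h ^ ε / ε) := by
              rw [hsub x 1 h2.le le_rfl]
              refine ENNReal.ofReal_le_ofReal ?_
              rw [show (1:ℝ) - 1 = 0 by norm_num, Real.zero_rpow hε0.ne', sub_zero]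
              have h3 : (1 - x) ^ ε ≤ h ^ ε :=
                Real.rpow_le_rpow (by linarith) (by linarith) hε0.le
              gcongr
            have p2 : (∫⁻ t in Set.Ioc (1:ℝ) (x+h), ENNReal.ofReal (|1-t| ^ (ε-1)))
                ≤ ENNReal.ofReal (h ^ ε / ε) := by
              rw [hsub' 1 (x+h) le_rfl h1.le]
              refine ENNReal.ofReal_le_ofReal ?_
              rw [show (1:ℝ) - 1 = 0 by norm_num, Real.zero_rpow hε0.ne', sub_zero]
              have h3 : (x + h - 1) ^ ε ≤ h ^ ε :=
                Real.rpow_le_rpow (by linarith) (by linarith) hε0.le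
              gcongr
            calc _ ≤ ENNReal.ofReal (h ^ ε / ε) + ENNReal.ofReal (h ^ ε / ε) :=
                  add_le_add p1 p2
              _ = ENNReal.ofReal (2 * h ^ ε / ε) := by
                  rw [← ENNReal.ofReal_add (by positivity) (by positivity)]
                  congr 1
                  ring
        have hB : avgIoc (fun t => |1-t| ^ (ε-1)) x (x+h)
            ≤ ENNReal.ofReal (2 * h ^ (ε-1) / ε) := by
          unfold avgIoc lintIoc
          rw [show x + h - x = h by ring]
          have heq : ENNReal.ofReal (2 * h ^ ε / ε)
              = ENNReal.ofReal h * ENNReal.ofReal (2 * h ^ (ε-1) / ε) := by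
            rw [← ENNReal.ofReal_mul hh.le]
            congr 1
            rw [show ε = 1 + (ε-1) by ring, Real.rpow_add hh, Real.rpow_one]
            ring
          calc (ENNReal.ofReal h)⁻¹ * ∫⁻ t in Set.Ioc x (x+h), ENNReal.ofReal (|1-t| ^ (ε-1))
              ≤ (ENNReal.ofReal h)⁻¹ * ENNReal.ofReal (2 * h ^ ε / ε) := by gcongr
            _ = ENNReal.ofReal (2 * h ^ (ε-1) / ε) := by
                rw [heq, ← mul_assoc,
                  ENNReal.inv_mul_cancel (ENNReal.ofReal_pos.mpr hh).ne' ENNReal.ofReal_ne_top,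
                  one_mul]
        have hreal1 : (3*h) ^ ((1-ε)*(p-1)) * (2 * h ^ (ε-1) / ε) ^ (p-1) ≤ (6/ε) ^ (p-1) := by
          have e1 : (2 * h ^ (ε-1) / ε) ^ (p-1) = (2/ε) ^ (p-1) * (h ^ (ε-1)) ^ (p-1) := by
            rw [← Real.mul_rpow (by positivity) (by positivity)]
            congr 1
            ring
          have e2 : (3*h) ^ ((1-ε)*(p-1)) = 3 ^ ((1-ε)*(p-1)) * h ^ ((1-ε)*(p-1)) :=
            Real.mul_rpow (by norm_num) hh.le
          have e3 : (h ^ (ε-1)) ^ (p-1) = h ^ ((ε-1)*(p-1)) := (Real.rpow_mul hh.le _ _).symm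
          have e4 : h ^ ((1-ε)*(p-1)) * h ^ ((ε-1)*(p-1)) = 1 := by
            rw [← Real.rpow_add hh, show (1-ε)*(p-1) + (ε-1)*(p-1) = 0 by ring, Real.rpow_zero]
          calc (3*h) ^ ((1-ε)*(p-1)) * (2 * h ^ (ε-1) / ε) ^ (p-1)
              = 3 ^ ((1-ε)*(p-1)) * (2/ε) ^ (p-1)
                  * (h ^ ((1-ε)*(p-1)) * h ^ ((ε-1)*(p-1))) := by
                rw [e1, e2, e3]; ring
            _ = 3 ^ ((1-ε)*(p-1)) * (2/ε) ^ (p-1) := by rw [e4, mul_one]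
            _ ≤ 3 ^ (p-1) * (2/ε) ^ (p-1) := by
                have := Real.rpow_le_rpow_of_exponent_le (by norm_num : (1:ℝ) ≤ 3) hαq
                have h5 : (0:ℝ) ≤ (2/ε) ^ (p-1) := Real.rpow_nonneg (by positivity) _
                nlinarith
            _ = (6/ε) ^ (p-1) := by
                rw [← Real.mul_rpow (by norm_num) (by positivity)]
                congr 1
                field_simp
                norm_num
        calc avgIoc w (x-h) x * avgIoc (fun t => |1-t| ^ (ε-1)) x (x+h) ^ (p-1)
            ≤ ENNReal.ofReal ((3*h) ^ ((1-ε)*(p-1)))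
                * ENNReal.ofReal (2 * h ^ (ε-1) / ε) ^ (p-1) := by
              gcongr
              exact hA.trans (ENNReal.ofReal_le_ofReal
                (Real.rpow_le_rpow (by positivity) (by linarith) hα.le))
          _ = ENNReal.ofReal ((3*h) ^ ((1-ε)*(p-1)) * (2 * h ^ (ε-1) / ε) ^ (p-1)) := by
              rw [ENNReal.ofReal_rpow_of_nonneg (by positivity) (by linarith : (0:ℝ) ≤ p - 1),
                ← ENNReal.ofReal_mul (by positivity)]
          _ ≤ ENNReal.ofReal ((6/ε) ^ (p-1)) := ENNReal.ofReal_le_ofReal hreal1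
      · -- interval far from the singularity
        push_neg at hcase
        have hd : (0:ℝ) < |1-x| := by linarith
        have hdh : (0:ℝ) < |1-x| - h := by linarith
        have hB2 : avgIoc (fun t => |1-t| ^ (ε-1)) x (x+h)
            ≤ ENNReal.ofReal ((|1-x| - h) ^ (ε-1)) := by
          refine avg_le_of_le (by linarith) fun t ht => ?_
          refine Real.rpow_le_rpow_of_nonpos hdh ?_ (by linarith)
          have h1 : |1-x| ≤ |1-t| + |t-x| := by
            calc |1-x| = |(1-t) + (t-x)| := by ring_nf
              _ ≤ |1-t| + |t-x| := abs_add_le _ _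
          have h2 : |t - x| ≤ h := abs_le.2 ⟨by linarith [ht.1], by linarith [ht.2]⟩
          linarith
        have hreal2 : (|1-x| + h) ^ ((1-ε)*(p-1)) * ((|1-x| - h) ^ (ε-1)) ^ (p-1)
            ≤ (6/ε) ^ (p-1) := by
          rw [← Real.rpow_mul hdh.le]
          have s1 : (|1-x| + h) ^ ((1-ε)*(p-1)) ≤ (2*|1-x|) ^ ((1-ε)*(p-1)) :=
            Real.rpow_le_rpow (by positivity) (by linarith) hα.le
          have s2 : (|1-x| - h) ^ ((ε-1)*(p-1)) ≤ (|1-x|/2) ^ ((ε-1)*(p-1)) :=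
            Real.rpow_le_rpow_of_nonpos (by positivity) (by linarith) (by nlinarith)
          have s3 : (2*|1-x|) ^ ((1-ε)*(p-1)) * (|1-x|/2) ^ ((ε-1)*(p-1))
              = 4 ^ ((1-ε)*(p-1)) := by
            rw [show (ε-1)*(p-1) = -((1-ε)*(p-1)) by ring, Real.rpow_neg (by positivity),
              ← div_eq_mul_inv, ← Real.div_rpow (by positivity) (by positivity),
              show 2*|1-x| / (|1-x|/2) = 4 by field_simp; ring]
          have s4 : (4:ℝ) ^ ((1-ε)*(p-1)) ≤ 4 ^ (p-1) :=
            Real.rpow_le_rpow_of_exponent_le (by norm_num) hαq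
          have s5 : (4:ℝ) ^ (p-1) ≤ (6/ε) ^ (p-1) := by
            refine Real.rpow_le_rpow (by norm_num) ?_ (by linarith)
            rw [le_div_iff₀ hε0]
            nlinarith
          have hn1 : (0:ℝ) ≤ (|1-x| - h) ^ ((ε-1)*(p-1)) := Real.rpow_nonneg hdh.le _
          have hn2 : (0:ℝ) ≤ (2*|1-x|) ^ ((1-ε)*(p-1)) := Real.rpow_nonneg (by positivity) _
          calc (|1-x| + h) ^ ((1-ε)*(p-1)) * (|1-x| - h) ^ ((ε-1)*(p-1))
              ≤ (2*|1-x|) ^ ((1-ε)*(p-1)) * (|1-x|/2) ^ ((ε-1)*(p-1)) :=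
                mul_le_mul s1 s2 hn1 hn2
            _ = 4 ^ ((1-ε)*(p-1)) := s3
            _ ≤ (6/ε) ^ (p-1) := s4.trans s5
        calc avgIoc w (x-h) x * avgIoc (fun t => |1-t| ^ (ε-1)) x (x+h) ^ (p-1)
            ≤ ENNReal.ofReal ((|1-x| + h) ^ ((1-ε)*(p-1)))
                * ENNReal.ofReal ((|1-x| - h) ^ (ε-1)) ^ (p-1) := by
              gcongr
          _ = ENNReal.ofReal ((|1-x| + h) ^ ((1-ε)*(p-1)) * ((|1-x| - h) ^ (ε-1)) ^ (p-1)) := by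
              rw [ENNReal.ofReal_rpow_of_nonneg (Real.rpow_nonneg hdh.le _)
                  (by linarith : (0:ℝ) ≤ p - 1),
                ← ENNReal.ofReal_mul (by positivity)]
          _ ≤ ENNReal.ofReal ((6/ε) ^ (p-1)) := ENNReal.ofReal_le_ofReal hreal2
    calc apPlusChar p w ^ (1/(p-1))
        ≤ (ENNReal.ofReal ((6/ε) ^ (p-1))) ^ (1/(p-1)) :=
          ENNReal.rpow_le_rpow key (by positivity)
      _ = ENNReal.ofReal (6/ε) := by
          rw [ENNReal.ofReal_rpow_of_nonneg (by positivity) (by positivity),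
            ← Real.rpow_mul h6ε.le, mul_one_div, div_self hq.ne', Real.rpow_one]
  -- ## Finiteness of the weighted norm of f
  have hγpos : (0:ℝ) < (ε*(p-1)-1)*p + (1-ε)*(p-1) + 1 := by
    have h1 : (ε*(p-1)-1)*p + (1-ε)*(p-1) + 1 = ε*((p-1)*(p-1)) := by ring
    rw [h1]
    exact mul_pos hε0 (mul_pos hq hq)
  have hfin : lnormW p w (fun x => ENNReal.ofReal |f x|) ≠ ∞ := by
    have hind : (fun x : ℝ => (ENNReal.ofReal |f x|) ^ p * ENNReal.ofReal (w x))
        = (Set.Ioo (0:ℝ) 1).indicator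
            (fun x => ENNReal.ofReal ((1-x) ^ ((ε*(p-1)-1)*p + (1-ε)*(p-1)))) := by
      funext x
      by_cases hx : x ∈ Set.Ioo (0:ℝ) 1
      · rw [Set.indicator_of_mem hx]
        have h1x : (0:ℝ) < 1 - x := by linarith [hx.2]
        rw [hf x, if_pos hx, hw x,
          abs_of_nonneg (Real.rpow_nonneg h1x.le _), abs_of_pos h1x,
          ENNReal.ofReal_rpow_of_nonneg (Real.rpow_nonneg h1x.le _) (by linarith : (0:ℝ) ≤ p),
          ← Real.rpow_mul h1x.le, ← ENNReal.ofReal_mul (Real.rpow_nonneg h1x.le _),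
          ← Real.rpow_add h1x]
      · rw [Set.indicator_of_notMem hx, hf x, if_neg hx]
        rw [abs_zero, ENNReal.ofReal_zero, ENNReal.zero_rpow_of_pos (by linarith), zero_mul]
    unfold lnormW
    rw [hind, lintegral_indicator measurableSet_Ioo,
      setLIntegral_congr Ioo_ae_eq_Ioc,
      lint_left (by norm_num) le_rfl (by linarith : (-1:ℝ) < (ε*(p-1)-1)*p + (1-ε)*(p-1))]
    exact ENNReal.rpow_ne_top_of_nonneg (by positivity) ENNReal.ofReal_ne_top
  -- ## Pointwise lower bound for the maximal function
  have he1 : (0:ℝ) < ε * (p-1) := by positivity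
  have hpt : ∀ x : ℝ, ENNReal.ofReal ((1/(p-1))/ε) * ENNReal.ofReal |f x| ≤ Mplus f x := by
    intro x
    by_cases hx : x ∈ Set.Ioo (0:ℝ) 1
    · have h1x : (0:ℝ) < 1 - x := by linarith [hx.2]
      have hint : ∫⁻ t in Set.Ioc x 1, ENNReal.ofReal |f t|
          = ENNReal.ofReal ((1-x) ^ (ε*(p-1)) / (ε*(p-1))) := by
        have e1 : ∫⁻ t in Set.Ioc x 1, ENNReal.ofReal |f t|
            = ∫⁻ t in Set.Ioo x 1, ENNReal.ofReal |f t| :=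
          (setLIntegral_congr Ioo_ae_eq_Ioc).symm
        have e2 : ∫⁻ t in Set.Ioo x 1, ENNReal.ofReal |f t|
            = ∫⁻ t in Set.Ioo x 1, ENNReal.ofReal ((1-t) ^ (ε*(p-1)-1)) := by
          refine setLIntegral_congr_fun measurableSet_Ioo (fun t ht => ?_)
          have htm : t ∈ Set.Ioo (0:ℝ) 1 := ⟨lt_trans hx.1 ht.1, ht.2⟩
          rw [hf t, if_pos htm,
            abs_of_nonneg (Real.rpow_nonneg (by linarith [ht.2] : (0:ℝ) ≤ 1-t) _)]
        have e3 : ∫⁻ t in Set.Ioo x 1, ENNReal.ofReal ((1-t) ^ (ε*(p-1)-1))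
            = ∫⁻ t in Set.Ioc x 1, ENNReal.ofReal ((1-t) ^ (ε*(p-1)-1)) :=
          setLIntegral_congr Ioo_ae_eq_Ioc
        rw [e1, e2, e3,
          lint_left (by linarith [hx.2] : x ≤ 1) le_rfl (by linarith : (-1:ℝ) < ε*(p-1)-1),
          show ε*(p-1)-1+1 = ε*(p-1) by ring]
        norm_num [Real.zero_rpow he1.ne']
      have hle : ENNReal.ofReal ((1/(p-1))/ε) * ENNReal.ofReal |f x|
          = (ENNReal.ofReal (1-x))⁻¹
              * ∫⁻ t in Set.Ioc x (x + (1-x)), ENNReal.ofReal |f t| := by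
        rw [show x + (1-x) = 1 by ring, hint]
        have hfx : |f x| = (1-x) ^ (ε*(p-1)-1) := by
          rw [hf x, if_pos hx]
          exact abs_of_nonneg (Real.rpow_nonneg h1x.le _)
        rw [hfx, ← ENNReal.ofReal_mul (by positivity)]
        have hval : (1-x) ^ (ε*(p-1)) / (ε*(p-1))
            = (1-x) * ((1/(p-1))/ε * (1-x) ^ (ε*(p-1)-1)) := by
          rw [show ε*(p-1) = 1 + (ε*(p-1)-1) by ring, Real.rpow_add h1x, Real.rpow_one]
          field_simp
          ring
        rw [hval, ENNReal.ofReal_mul h1x.le, ← mul_assoc,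
          ENNReal.inv_mul_cancel (ENNReal.ofReal_pos.mpr h1x).ne' ENNReal.ofReal_ne_top,
          one_mul]
      rw [hle]
      exact le_iSup₂ (f := fun (h : ℝ) (_ : 0 < h) =>
        (ENNReal.ofReal h)⁻¹ * ∫⁻ t in Set.Ioc x (x + h), ENNReal.ofReal |f t|) (1-x) h1x
    · rw [hf x, if_neg hx, abs_zero, ENNReal.ofReal_zero, mul_zero]
      exact zero_le
  -- ## Conclusion
  refine ⟨hQlow, hQup, hfin, ?_⟩
  have hmono : lnormW p w (fun x => ENNReal.ofReal ((1/(p-1))/ε) * ENNReal.ofReal |f x|)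
      ≤ lnormW p w (Mplus f) := by
    unfold lnormW
    refine ENNReal.rpow_le_rpow (lintegral_mono fun x => ?_) (by positivity)
    exact mul_le_mul' (ENNReal.rpow_le_rpow (hpt x) (by linarith)) le_rfl
  calc ENNReal.ofReal ((1/(p-1))/ε) * lnormW p w (fun x => ENNReal.ofReal |f x|)
      = lnormW p w (fun x => ENNReal.ofReal ((1/(p-1))/ε) * ENNReal.ofReal |f x|) :=
        (lnormW_aux (by linarith) w _ ENNReal.ofReal_ne_top _).symm
    _ ≤ lnormW p w (Mplus f) := hmono

end
end

section
/- Let 1<p,q<∞ and let u ∈ A_{p,q}^-(ℝ). Then for all a ∈ ℝ and r > 0, (∫_{a-r}^a u^q) / (∫_{a-2r}^a u^q) ≤ ‖u‖_{A_{p,q}^-(ℝ)} / (‖u‖_{A_{p,q}^-(ℝ)} + 1). Similarly, if u ∈ A_{p,q}^+(ℝ), then for all a ∈ ℝ and r > 0, (∫_a^{a+r} u^q) / (∫_a^{a+2r} u^q) ≤ ‖u‖_{A_{p,q}^+(ℝ)} / (‖u‖_{A_{p,q}^+(ℝ)} + 1). -/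
open MeasureTheory Set Filter
open scoped ENNReal

noncomputable section
open MeasureTheory Set Filter
open scoped ENNReal

noncomputable section

/-- A weight on `ℝ`: an a.e. positive, locally integrable function. -/
def IsWeight (w : ℝ → ℝ) : Prop :=
  (∀ᵐ x : ℝ, 0 < w x) ∧ MeasureTheory.LocallyIntegrable w MeasureTheory.volume

/-- The one-sided `A_{p,q}^-` characteristic:
`sup_{x,h>0} ((1/h)∫_x^{x+h} u^q)((1/h)∫_{x-h}^x u^{-p'})^{q/p'}`, `p' = p/(p-1)`. -/
def apqMinusChar (p q : ℝ) (u : ℝ → ℝ) : ℝ≥0∞ :=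
  ⨆ (x : ℝ) (h : ℝ) (_ : 0 < h),
    avgIoc (fun t => u t ^ q) x (x + h) *
      avgIoc (fun t => u t ^ (-(p / (p - 1)))) (x - h) x ^ (q / (p / (p - 1)))

/-- The one-sided `A_{p,q}^+` characteristic:
`sup_{x,h>0} ((1/h)∫_{x-h}^x u^q)((1/h)∫_x^{x+h} u^{-p'})^{q/p'}`, `p' = p/(p-1)`. -/
def apqPlusChar (p q : ℝ) (u : ℝ → ℝ) : ℝ≥0∞ :=
  ⨆ (x : ℝ) (h : ℝ) (_ : 0 < h),
    avgIoc (fun t => u t ^ q) (x - h) x *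
      avgIoc (fun t => u t ^ (-(p / (p - 1)))) x (x + h) ^ (q / (p / (p - 1)))

lemma lint_pos (u : ℝ → ℝ) (hpos : ∀ᵐ x : ℝ, 0 < u x) (hm : AEMeasurable u)
    (e c d : ℝ) (hcd : c < d) : lintIoc (fun t => u t ^ e) c d ≠ 0 := by
  intro h0
  have hmeas : AEMeasurable (fun t => ENNReal.ofReal (u t ^ e))
      (volume.restrict (Set.Ioc c d)) :=
    ((hm.pow aemeasurable_const).ennreal_ofReal).restrict
  rw [lintIoc, lintegral_eq_zero_iff' hmeas] at h0
  have hpos' : ∀ᵐ x ∂(volume.restrict (Set.Ioc c d)), 0 < u x := ae_restrict_of_ae hpos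
  have hFalse : ∀ᵐ x ∂(volume.restrict (Set.Ioc c d)), False := by
    filter_upwards [h0, hpos'] with x hx hx2
    have h3 : (0:ℝ) < u x ^ e := Real.rpow_pos_of_pos hx2 e
    simp only [Pi.zero_apply, ENNReal.ofReal_eq_zero] at hx
    linarith
  have hne : (volume.restrict (Set.Ioc c d)) ≠ 0 := by
    intro h
    have h4 : (volume.restrict (Set.Ioc c d)) Set.univ ≠ 0 := by
      rw [Measure.restrict_apply_univ, Real.volume_Ioc]
      exact (ENNReal.ofReal_pos.2 (by linarith)).ne'
    rw [h] at h4
    simp at h4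
  rw [Filter.eventually_false_iff_eq_bot] at hFalse
  exact (MeasureTheory.ae_neBot.2 hne).ne hFalse

lemma jensen (u : ℝ → ℝ) (hpos : ∀ᵐ x : ℝ, 0 < u x) (hm : AEMeasurable u)
    (q pc : ℝ) (hq : 0 < q) (hpc : 0 < pc) (c d : ℝ) (hcd : c < d) :
    ENNReal.ofReal (d - c) ^ (q / pc + 1) ≤
      lintIoc (fun t => u t ^ q) c d *
        lintIoc (fun t => u t ^ (-pc)) c d ^ (q / pc) := by
  set μ := volume.restrict (Set.Ioc c d) with hμ
  set s : ℝ := pc / q with hs_def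
  set σ : ℝ := q / pc with hσ_def
  have hs : 0 < s := div_pos hpc hq
  have hσ : 0 < σ := div_pos hq hpc
  have h1s : (0:ℝ) < 1 + s := by linarith
  set F : ℝ → ℝ≥0∞ := fun t => ENNReal.ofReal (u t ^ q) with hF_def
  have hFm : AEMeasurable F μ := ((hm.pow aemeasurable_const).ennreal_ofReal).restrict
  have hconj : Real.HolderConjugate ((1+s)/s) (1+s) := by
    constructor
    · rw [inv_div, inv_one, ← one_div, ← add_div, add_comm, div_self h1s.ne']
    · exact div_pos h1s hs
    · exact h1s
  have hold := ENNReal.lintegral_mul_le_Lp_mul_Lq μ hconj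
      (hFm.pow (aemeasurable_const (b := s/(1+s))))
      (hFm.pow (aemeasurable_const (b := -(s/(1+s)))))
  have hposμ : ∀ᵐ x ∂μ, 0 < u x := ae_restrict_of_ae hpos
  -- LHS is the measure of the interval
  have hLHS : ∫⁻ a, ((fun t => F t ^ (s/(1+s))) * (fun t => F t ^ (-(s/(1+s))))) a ∂μ
      = ENNReal.ofReal (d - c) := by
    have hone : ∀ᵐ t ∂μ,
        ((fun t => F t ^ (s/(1+s))) * (fun t => F t ^ (-(s/(1+s))))) t = 1 := by
      filter_upwards [hposμ] with t ht
      have h1 : F t ≠ 0 := by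
        simp only [hF_def, ne_eq, ENNReal.ofReal_eq_zero, not_le]
        exact Real.rpow_pos_of_pos ht q
      have h2 : F t ≠ ⊤ := ENNReal.ofReal_ne_top
      simp only [Pi.mul_apply]
      rw [← ENNReal.rpow_add _ _ h1 h2]
      simp
    rw [lintegral_congr_ae hone, lintegral_one, Measure.restrict_apply_univ, Real.volume_Ioc]
  rw [hLHS] at hold
  -- first RHS factor
  have hfst : (fun a => (F a ^ (s/(1+s))) ^ ((1+s)/s)) = F := by
    funext a
    rw [← ENNReal.rpow_mul, show s/(1+s) * ((1+s)/s) = 1 by field_simp, ENNReal.rpow_one]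
  -- second RHS factor
  have hsnd : ∫⁻ a, (F a ^ (-(s/(1+s)))) ^ (1+s) ∂μ
      = lintIoc (fun t => u t ^ (-pc)) c d := by
    rw [lintIoc, ← hμ]
    apply lintegral_congr_ae
    filter_upwards [hposμ] with t ht
    rw [← ENNReal.rpow_mul, show -(s/(1+s)) * (1+s) = -s by field_simp]
    rw [hF_def]
    rw [ENNReal.ofReal_rpow_of_pos (Real.rpow_pos_of_pos ht q)]
    rw [← Real.rpow_mul ht.le, show q * -s = -pc by rw [hs_def]; field_simp]
  -- rewrite the RHS of hold
  have hfst' : ∫⁻ a, (F a ^ (s/(1+s))) ^ ((1+s)/s) ∂μ = ∫⁻ a, F a ∂μ :=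
    lintegral_congr fun a => by
      rw [← ENNReal.rpow_mul, show s/(1+s) * ((1+s)/s) = 1 by field_simp, ENNReal.rpow_one]
  rw [hfst', hsnd, one_div_div] at hold
  set X : ℝ≥0∞ := ∫⁻ a, F a ∂μ with hX_def
  set Y : ℝ≥0∞ := lintIoc (fun t => u t ^ (-pc)) c d with hY_def
  -- raise to power (1+s)
  have h2 := ENNReal.rpow_le_rpow hold h1s.le
  rw [ENNReal.mul_rpow_of_nonneg _ _ h1s.le, ← ENNReal.rpow_mul, ← ENNReal.rpow_mul,
    show s/(1+s) * (1+s) = s by field_simp, show 1/(1+s) * (1+s) = 1 by field_simp,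
    ENNReal.rpow_one] at h2
  -- raise to power σ
  have h3 := ENNReal.rpow_le_rpow h2 hσ.le
  rw [ENNReal.mul_rpow_of_nonneg _ _ hσ.le, ← ENNReal.rpow_mul, ← ENNReal.rpow_mul,
    show s * σ = 1 by rw [hs_def, hσ_def]; field_simp,
    show (1+s) * σ = σ + 1 by
      rw [hs_def, hσ_def]; field_simp,
    ENNReal.rpow_one] at h3
  have hXeq : X = lintIoc (fun t => u t ^ q) c d := rfl
  rw [hXeq] at h3
  exact h3


lemma main_ineq (u : ℝ → ℝ) (hpos : ∀ᵐ x : ℝ, 0 < u x) (hm : AEMeasurable u)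
    (q pc : ℝ) (hq : 0 < q) (hpc : 0 < pc)
    (c d e f : ℝ) (hcd : c < d) (hef : e < f) (hlen : f - e = d - c)
    (N : ℝ≥0∞) (hN : N ≠ ⊤)
    (hchar : avgIoc (fun t => u t ^ q) e f *
        avgIoc (fun t => u t ^ (-pc)) c d ^ (q / pc) ≤ N) :
    lintIoc (fun t => u t ^ q) e f ≤ N * lintIoc (fun t => u t ^ q) c d := by
  simp only [avgIoc] at hchar
  rw [hlen] at hchar
  set σ : ℝ := q / pc with hσ_def
  have hσ : 0 < σ := div_pos hq hpc
  set m : ℝ≥0∞ := ENNReal.ofReal (d - c) with hm_def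
  have hm0 : m ≠ 0 := (ENNReal.ofReal_pos.2 (by linarith)).ne'
  have hmtop : m ≠ ⊤ := ENNReal.ofReal_ne_top
  set A := lintIoc (fun t => u t ^ q) e f with hA_def
  set C := lintIoc (fun t => u t ^ q) c d with hC_def
  set D := lintIoc (fun t => u t ^ (-pc)) c d with hD_def
  have hA0 : A ≠ 0 := lint_pos u hpos hm q e f hef
  have hD0 : D ≠ 0 := lint_pos u hpos hm (-pc) c d hcd
  have hDtop : D ≠ ⊤ := by
    intro hD
    rw [hD, ENNReal.mul_top (ENNReal.inv_ne_zero.2 hmtop), ENNReal.top_rpow_of_pos hσ,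
      ENNReal.mul_top (mul_ne_zero (ENNReal.inv_ne_zero.2 hmtop) hA0)] at hchar
    exact hN (top_le_iff.1 hchar)
  have hJ : m ^ (σ + 1) ≤ C * D ^ σ := jensen u hpos hm q pc hq hpc c d hcd
  have hmul : (m⁻¹ * A) * (m⁻¹ * D) ^ σ * m ^ (σ + 1) = A * D ^ σ := by
    rw [ENNReal.mul_rpow_of_nonneg _ _ hσ.le, ENNReal.inv_rpow,
      ENNReal.rpow_add σ 1 hm0 hmtop, ENNReal.rpow_one]
    have h1 : m⁻¹ * m = 1 := ENNReal.inv_mul_cancel hm0 hmtop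
    have hmσ0 : m ^ σ ≠ 0 := (ENNReal.rpow_pos (zero_lt_iff.2 hm0) hmtop).ne'
    have hmσt : m ^ σ ≠ ⊤ := ENNReal.rpow_ne_top_of_nonneg hσ.le hmtop
    have h2 : (m ^ σ)⁻¹ * m ^ σ = 1 := ENNReal.inv_mul_cancel hmσ0 hmσt
    calc m⁻¹ * A * ((m ^ σ)⁻¹ * D ^ σ) * (m ^ σ * m)
        = (m⁻¹ * m) * ((m ^ σ)⁻¹ * m ^ σ) * (A * D ^ σ) := by ring
      _ = A * D ^ σ := by rw [h1, h2, one_mul, one_mul]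
  have key : A * D ^ σ ≤ N * m ^ (σ + 1) := by
    rw [← hmul]; exact mul_le_mul_left hchar _
  have key2 : A * D ^ σ ≤ N * C * D ^ σ := by
    rw [mul_assoc]; exact key.trans (mul_le_mul_right hJ N)
  exact (ENNReal.mul_le_mul_iff_left (ENNReal.rpow_pos (zero_lt_iff.2 hD0) hDtop).ne'
    (ENNReal.rpow_ne_top_of_nonneg hσ.le hDtop)).1 key2

lemma assemble (N A C : ℝ≥0∞) (hN : N ≠ ⊤) (hC0 : C ≠ 0) (hkey : A ≤ N * C) :
    A / (C + A) ≤ N / (N + 1) := by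
  by_cases htop : C + A = ⊤
  · rw [htop, ENNReal.div_top]; exact zero_le
  · have hB0 : C + A ≠ 0 := by simp [hC0]
    have hN1 : N + 1 ≠ 0 := by simp
    have hN1t : N + 1 ≠ ⊤ := ENNReal.add_ne_top.2 ⟨hN, ENNReal.one_ne_top⟩
    rw [ENNReal.div_le_iff hB0 htop, div_eq_mul_inv,
      show N * (N + 1)⁻¹ * (C + A) = N * (C + A) * (N + 1)⁻¹ by ring,
      ← div_eq_mul_inv, ENNReal.le_div_iff_mul_le (Or.inl hN1) (Or.inl hN1t)]
    calc A * (N + 1) = A * N + A := by rw [mul_add, mul_one]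
      _ ≤ A * N + N * C := add_le_add_right hkey _
      _ = N * (C + A) := by ring

/-- If `u ∈ A_{p,q}^-(ℝ)`, then `(∫_{a-r}^a u^q)/(∫_{a-2r}^a u^q) ≤ N/(N+1)` with
`N = ‖u‖_{A_{p,q}^-}`; similarly, if `u ∈ A_{p,q}^+(ℝ)`, then
`(∫_a^{a+r} u^q)/(∫_a^{a+2r} u^q) ≤ N/(N+1)` with `N = ‖u‖_{A_{p,q}^+}`. -/
theorem stmt5 (p q : ℝ) (hp : 1 < p) (hq : 1 < q) (u : ℝ → ℝ) (hu : IsWeight u) :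
    (apqMinusChar p q u ≠ ∞ →
      ∀ a r : ℝ, 0 < r →
        lintIoc (fun t => u t ^ q) (a - r) a /
            lintIoc (fun t => u t ^ q) (a - 2 * r) a ≤
          apqMinusChar p q u / (apqMinusChar p q u + 1)) ∧
    (apqPlusChar p q u ≠ ∞ →
      ∀ a r : ℝ, 0 < r →
        lintIoc (fun t => u t ^ q) a (a + r) /
            lintIoc (fun t => u t ^ q) a (a + 2 * r) ≤
          apqPlusChar p q u / (apqPlusChar p q u + 1)) := by
  have hq0 : (0:ℝ) < q := by linarith
  have hpc : (0:ℝ) < p / (p - 1) := div_pos (by linarith) (by linarith)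
  have hm : AEMeasurable u := hu.2.aestronglyMeasurable.aemeasurable
  constructor
  · intro hN a r hr
    have hchar : avgIoc (fun t => u t ^ q) (a - r) a *
        avgIoc (fun t => u t ^ (-(p / (p - 1)))) (a - 2 * r) (a - r) ^ (q / (p / (p - 1))) ≤
        apqMinusChar p q u := by
      have h1 : avgIoc (fun t => u t ^ q) (a - r) ((a - r) + r) *
          avgIoc (fun t => u t ^ (-(p / (p - 1)))) ((a - r) - r) (a - r) ^ (q / (p / (p - 1))) ≤
          apqMinusChar p q u := by
        rw [apqMinusChar]
        exact le_iSup_of_le (a - r) (le_iSup_of_le r (le_iSup_of_le hr le_rfl))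
      rw [show (a - r) + r = a by ring, show (a - r) - r = a - 2 * r by ring] at h1
      exact h1
    have key := main_ineq u hu.1 hm q (p / (p - 1)) hq0 hpc
      (a - 2 * r) (a - r) (a - r) a (by linarith) (by linarith) (by ring)
      (apqMinusChar p q u) hN hchar
    have hC0 : lintIoc (fun t => u t ^ q) (a - 2 * r) (a - r) ≠ 0 :=
      lint_pos u hu.1 hm q (a - 2 * r) (a - r) (by linarith)
    have hsplit : lintIoc (fun t => u t ^ q) (a - 2 * r) a =
        lintIoc (fun t => u t ^ q) (a - 2 * r) (a - r) +
          lintIoc (fun t => u t ^ q) (a - r) a := by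
      rw [lintIoc, ← Set.Ioc_union_Ioc_eq_Ioc (by linarith : a - 2 * r ≤ a - r)
        (by linarith : a - r ≤ a),
        lintegral_union measurableSet_Ioc (Set.Ioc_disjoint_Ioc_of_le le_rfl)]
      rfl
    rw [hsplit]
    exact assemble _ _ _ hN hC0 key
  · intro hN a r hr
    have hchar : avgIoc (fun t => u t ^ q) a (a + r) *
        avgIoc (fun t => u t ^ (-(p / (p - 1)))) (a + r) (a + 2 * r) ^ (q / (p / (p - 1))) ≤
        apqPlusChar p q u := by
      have h1 : avgIoc (fun t => u t ^ q) ((a + r) - r) (a + r) *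
          avgIoc (fun t => u t ^ (-(p / (p - 1)))) (a + r) ((a + r) + r) ^ (q / (p / (p - 1))) ≤
          apqPlusChar p q u := by
        rw [apqPlusChar]
        exact le_iSup_of_le (a + r) (le_iSup_of_le r (le_iSup_of_le hr le_rfl))
      rw [show (a + r) - r = a by ring, show (a + r) + r = a + 2 * r by ring] at h1
      exact h1
    have key := main_ineq u hu.1 hm q (p / (p - 1)) hq0 hpc
      (a + r) (a + 2 * r) a (a + r) (by linarith) (by linarith) (by ring)
      (apqPlusChar p q u) hN hchar
    have hC0 : lintIoc (fun t => u t ^ q) (a + r) (a + 2 * r) ≠ 0 :=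
      lint_pos u hu.1 hm q (a + r) (a + 2 * r) (by linarith)
    have hsplit : lintIoc (fun t => u t ^ q) a (a + 2 * r) =
        lintIoc (fun t => u t ^ q) a (a + r) +
          lintIoc (fun t => u t ^ q) (a + r) (a + 2 * r) := by
      rw [lintIoc, ← Set.Ioc_union_Ioc_eq_Ioc (by linarith : a ≤ a + r)
        (by linarith : a + r ≤ a + 2 * r),
        lintegral_union measurableSet_Ioc (Set.Ioc_disjoint_Ioc_of_le le_rfl)]
      rfl
    rw [hsplit, add_comm (lintIoc (fun t => u t ^ q) a (a + r))
      (lintIoc (fun t => u t ^ q) (a + r) (a + 2 * r))]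
    exact assemble _ _ _ hN hC0 key

end
end
end
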